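/- Suppose the fairness bound condition L_o · L_f · (W₁(ν_s⁰, ν_s¹) + δ_t⁰ + δ_t¹ + δ_s⁰ + δ_s¹ + 2Δ_ts) ≤ Γ⁰ holds, where Δ_ts = W₁(ν_t, ν_s), δ_t^g = W₁(ν_t^g, ν_t), δ_s^g = W₁(ν_s^g, ν_s), f : Z → Y is L_f-Lipschitz, and O is a class of L_o-Lipschitz bounded functions Y → ℝ. Then the target-domain group fairness measure Γ_UGF^t = sup_{o ∈ O} |E_{ν_t⁰}[o ∘ f] − E_{ν_t¹}[o ∘ f]| satisfies Γ_UGF^t ≤ Γ⁰. -/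

import Mathlib

open MeasureTheory
open scoped NNReal ENNReal

/-- The Wasserstein-1 (Kantorovich) distance between two measures on a metric
space, defined as the infimum of `∫ d(x,y) dπ` over all couplings `π`. -/
noncomputable def W1 {Z : Type*} [MetricSpace Z] [MeasurableSpace Z]
    (μ ν : Measure Z) : ℝ≥0∞ :=
  ⨅ π ∈ {π : Measure (Z × Z) | π.map Prod.fst = μ ∧ π.map Prod.snd = ν},
    ∫⁻ p, edist p.1 p.2 ∂π

/-- `μ` has a finite first moment (about some base point). -/
def FiniteFirstMoment {Z : Type*} [MetricSpace Z] [MeasurableSpace Z]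
    (μ : Measure Z) : Prop :=
  ∃ z₀ : Z, ∫⁻ z, edist z z₀ ∂μ ≠ ∞

lemma W1_ne_top {Z : Type*} [MetricSpace Z] [MeasurableSpace Z]
    [OpensMeasurableSpace Z] (μ ν : Measure Z)
    [IsProbabilityMeasure μ] [IsProbabilityMeasure ν]
    (hμ : FiniteFirstMoment μ) (hν : FiniteFirstMoment ν) : W1 μ ν ≠ ∞ := by
  obtain ⟨z₀, h₀⟩ := hμ
  obtain ⟨z₁, h₁⟩ := hν
  have hmem : (μ.prod ν) ∈ {π : Measure (Z × Z) |
      π.map Prod.fst = μ ∧ π.map Prod.snd = ν} := by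
    constructor
    · rw [Measure.map_fst_prod]; simp
    · rw [Measure.map_snd_prod]; simp
  have hle : W1 μ ν ≤ ∫⁻ p, edist p.1 p.2 ∂(μ.prod ν) := biInf_le _ hmem
  have hbound : ∫⁻ p, edist p.1 p.2 ∂(μ.prod ν)
      ≤ ∫⁻ p : Z × Z, (edist p.1 z₀ + edist z₀ z₁ + edist z₁ p.2) ∂(μ.prod ν) := by
    refine lintegral_mono fun p => ?_
    calc edist p.1 p.2 ≤ edist p.1 z₀ + edist z₀ p.2 := edist_triangle _ _ _
      _ ≤ edist p.1 z₀ + (edist z₀ z₁ + edist z₁ p.2) := by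
            gcongr; exact edist_triangle _ _ _
      _ = _ := by ring
  have hz₀ : Measurable fun z : Z => edist z z₀ :=
    (continuous_id.edist continuous_const).measurable
  have hz₁ : Measurable fun z : Z => edist z₁ z :=
    (continuous_const.edist continuous_id).measurable
  have hm1 : Measurable fun p : Z × Z => edist p.1 z₀ := hz₀.comp measurable_fst
  have hm2 : Measurable fun p : Z × Z => edist z₁ p.2 := hz₁.comp measurable_snd
  have e1 := lintegral_map hz₀ (measurable_fst (α := Z) (β := Z)) (μ := μ.prod ν)
  rw [Measure.map_fst_prod, measure_univ, one_smul] at e1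
  have e2 := lintegral_map hz₁ (measurable_snd (α := Z) (β := Z)) (μ := μ.prod ν)
  rw [Measure.map_snd_prod, measure_univ, one_smul] at e2
  have h1' : ∫⁻ z, edist z₁ z ∂ν ≠ ∞ := by
    simp_rw [edist_comm z₁]; exact h₁
  refine ne_top_of_le_ne_top ?_ (hle.trans hbound)
  rw [lintegral_add_right _ hm2, lintegral_add_right _ measurable_const,
    ← e1, ← e2, lintegral_const]
  simp only [measure_univ, mul_one]
  exact ENNReal.add_ne_top.2 ⟨ENNReal.add_ne_top.2 ⟨h₀, by simp [edist_ne_top]⟩, h1'⟩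

lemma abs_integral_sub_le_W1 {Z : Type*} [MetricSpace Z] [MeasurableSpace Z]
    [OpensMeasurableSpace Z] (μ ν : Measure Z)
    [IsProbabilityMeasure μ] [IsProbabilityMeasure ν]
    (L : ℝ≥0) (g : Z → ℝ) (hg : LipschitzWith L g) (B : ℝ) (hB : ∀ z, |g z| ≤ B)
    (hW : W1 μ ν ≠ ∞) :
    |∫ z, g z ∂μ - ∫ z, g z ∂ν| ≤ (L : ℝ) * (W1 μ ν).toReal := by
  have hgc : Continuous g := hg.continuous
  have hgm : Measurable g := hgc.measurable
  rcases eq_or_ne L 0 with hL | hL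
  · have hZ : Nonempty Z := by
      by_contra h
      have h1 := measure_univ (μ := μ)
      rw [Set.univ_eq_empty_iff.2 (not_nonempty_iff.1 h), measure_empty] at h1
      exact zero_ne_one h1
    obtain ⟨z₀⟩ := hZ
    have hconst : ∀ z, g z = g z₀ := fun z => by
      have h2 := hg.dist_le_mul z z₀
      rw [hL] at h2
      exact dist_le_zero.1 (by simpa using h2)
    have e : ∫ z, g z ∂μ = ∫ z, g z ∂ν := by
      have hgf : g = fun _ => g z₀ := funext hconst
      rw [hgf, integral_const, integral_const]; simp
    rw [e, sub_self, abs_zero, hL]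
    positivity
  have key : ENNReal.ofReal |∫ z, g z ∂μ - ∫ z, g z ∂ν| ≤ (L : ℝ≥0∞) * W1 μ ν := by
    rw [W1, ENNReal.mul_iInf_of_ne (by simpa using hL) (by simp)]
    refine le_iInf fun π => ?_
    rw [ENNReal.mul_iInf_of_ne (by simpa using hL) (by simp)]
    refine le_iInf fun hπ => ?_
    obtain ⟨hπ1, hπ2⟩ := hπ
    have hprob : IsProbabilityMeasure π := by
      constructor
      have h1 : π.map Prod.fst Set.univ = 1 := by rw [hπ1]; exact measure_univ
      rwa [Measure.map_apply measurable_fst MeasurableSet.univ, Set.preimage_univ] at h1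
    have hm1 : Measurable fun p : Z × Z => g p.1 := hgm.comp measurable_fst
    have hm2 : Measurable fun p : Z × Z => g p.2 := hgm.comp measurable_snd
    have hIfst : Integrable (fun p : Z × Z => g p.1) π :=
      (integrable_const B).mono' hm1.aestronglyMeasurable
        (ae_of_all _ fun p => by simpa [Real.norm_eq_abs] using hB p.1)
    have hIsnd : Integrable (fun p : Z × Z => g p.2) π :=
      (integrable_const B).mono' hm2.aestronglyMeasurable
        (ae_of_all _ fun p => by simpa [Real.norm_eq_abs] using hB p.2)
    have hμeq : ∫ z, g z ∂μ = ∫ p : Z × Z, g p.1 ∂π := by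
      rw [← hπ1, integral_map measurable_fst.aemeasurable hgc.aestronglyMeasurable]
    have hνeq : ∫ z, g z ∂ν = ∫ p : Z × Z, g p.2 ∂π := by
      rw [← hπ2, integral_map measurable_snd.aemeasurable hgc.aestronglyMeasurable]
    calc ENNReal.ofReal |∫ z, g z ∂μ - ∫ z, g z ∂ν|
        ≤ ENNReal.ofReal (∫ p : Z × Z, |g p.1 - g p.2| ∂π) := by
          apply ENNReal.ofReal_le_ofReal
          rw [hμeq, hνeq, ← integral_sub hIfst hIsnd]
          simpa [Real.norm_eq_abs] using
            norm_integral_le_integral_norm (fun p : Z × Z => g p.1 - g p.2) (μ := π)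
      _ = ∫⁻ p : Z × Z, ENNReal.ofReal |g p.1 - g p.2| ∂π :=
          ofReal_integral_eq_lintegral_ofReal (hIfst.sub hIsnd).abs
            (ae_of_all _ fun p => abs_nonneg _)
      _ ≤ ∫⁻ p : Z × Z, (L : ℝ≥0∞) * edist p.1 p.2 ∂π := by
          refine lintegral_mono fun p => ?_
          have h3 := hg p.1 p.2
          rwa [edist_dist (g p.1), Real.dist_eq] at h3
      _ = (L : ℝ≥0∞) * ∫⁻ p, edist p.1 p.2 ∂π := lintegral_const_mul' _ _ (by simp)
  have hfin : (L : ℝ≥0∞) * W1 μ ν ≠ ∞ := ENNReal.mul_ne_top (by simp) hW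
  have h4 := (ENNReal.ofReal_le_iff_le_toReal hfin).1 key
  rwa [ENNReal.toReal_mul, ENNReal.coe_toReal] at h4

/-- fairness preservation.  If the Lipschitz-scaled bound
`L_o L_f (W₁(νs⁰,νs¹) + δ_t⁰ + δ_t¹ + δ_s⁰ + δ_s¹ + 2Δ_ts) ≤ Γ⁰` holds, then
the target-domain UGF measure is at most `Γ⁰`. -/
theorem fairness_preservation {Z Y : Type*} [MetricSpace Z] [MeasurableSpace Z]
    [OpensMeasurableSpace Z] [MetricSpace Y]
    (νt₀ νt₁ νs₀ νs₁ νt νs : Measure Z)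
    [IsProbabilityMeasure νt₀] [IsProbabilityMeasure νt₁]
    [IsProbabilityMeasure νs₀] [IsProbabilityMeasure νs₁]
    [IsProbabilityMeasure νt] [IsProbabilityMeasure νs]
    (ht₀ : FiniteFirstMoment νt₀) (ht₁ : FiniteFirstMoment νt₁)
    (hs₀ : FiniteFirstMoment νs₀) (hs₁ : FiniteFirstMoment νs₁)
    (ht : FiniteFirstMoment νt) (hs : FiniteFirstMoment νs)
    (Lf Lo : ℝ≥0) (B : ℝ) (f : Z → Y) (hf : LipschitzWith Lf f)
    (Γ₀ : ℝ) (hΓ₀ : 0 ≤ Γ₀)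
    (hcond : Lo * Lf * ((W1 νs₀ νs₁).toReal
        + (W1 νt₀ νt).toReal + (W1 νt₁ νt).toReal
        + (W1 νs₀ νs).toReal + (W1 νs₁ νs).toReal
        + 2 * (W1 νt νs).toReal) ≤ Γ₀) :
    (⨆ o ∈ {o : Y → ℝ | LipschitzWith Lo o ∧ ∀ y, |o y| ≤ B},
        |∫ z, o (f z) ∂νt₀ - ∫ z, o (f z) ∂νt₁|) ≤ Γ₀ := by
  refine Real.iSup_le (fun o => Real.iSup_le (fun ho => ?_) hΓ₀) hΓ₀
  obtain ⟨hoL, hoB⟩ := ho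
  set g : Z → ℝ := fun z => o (f z) with hgdef
  have hg : LipschitzWith (Lo * Lf) g := hoL.comp hf
  have hgB : ∀ z, |g z| ≤ B := fun z => hoB (f z)
  have key : ∀ (μ ν : Measure Z) [IsProbabilityMeasure μ] [IsProbabilityMeasure ν],
      FiniteFirstMoment μ → FiniteFirstMoment ν →
      |∫ z, g z ∂μ - ∫ z, g z ∂ν| ≤ ((Lo : ℝ) * Lf) * (W1 μ ν).toReal := by
    intro μ ν _ _ hμ hν
    have := abs_integral_sub_le_W1 μ ν (Lo * Lf) g hg B hgB (W1_ne_top μ ν hμ hν)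
    simpa using this
  have h1 := key νt₀ νt ht₀ ht
  have h2 := key νt νs ht hs
  have h3 := key νs₀ νs hs₀ hs
  have h4 := key νs₀ νs₁ hs₀ hs₁
  have h5 := key νs₁ νs hs₁ hs
  have h6 := key νt₁ νt ht₁ ht
  have chain : |∫ z, g z ∂νt₀ - ∫ z, g z ∂νt₁|
      ≤ |∫ z, g z ∂νt₀ - ∫ z, g z ∂νt| + |∫ z, g z ∂νt - ∫ z, g z ∂νs|
        + |∫ z, g z ∂νs₀ - ∫ z, g z ∂νs| + |∫ z, g z ∂νs₀ - ∫ z, g z ∂νs₁|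
        + |∫ z, g z ∂νs₁ - ∫ z, g z ∂νs| + |∫ z, g z ∂νt - ∫ z, g z ∂νs|
        + |∫ z, g z ∂νt₁ - ∫ z, g z ∂νt| := by
    set a := ∫ z, g z ∂νt₀
    set b := ∫ z, g z ∂νt₁
    set c := ∫ z, g z ∂νs₀
    set d := ∫ z, g z ∂νs₁
    set e := ∫ z, g z ∂νt
    set k := ∫ z, g z ∂νs
    calc |a - b| = |(a - e) + (e - k) + (-(c - k)) + (c - d) + (d - k) + (-(e-k)) + (-(b - e))| := by
          ring_nf
      _ ≤ _ := by
          have := abs_add_three (a - e) (e - k) (-(c-k))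
          calc |(a - e) + (e - k) + (-(c - k)) + (c - d) + (d - k) + (-(e-k)) + (-(b - e))|
              ≤ |(a - e) + (e - k) + (-(c - k)) + (c - d) + (d - k) + (-(e-k))| + |(-(b - e))| := abs_add_le _ _
            _ ≤ |(a - e) + (e - k) + (-(c - k)) + (c - d) + (d - k)| + |(-(e-k))| + |(-(b - e))| := by
                gcongr; exact abs_add_le _ _
            _ ≤ |(a - e) + (e - k) + (-(c - k)) + (c - d)| + |d - k| + |(-(e-k))| + |(-(b - e))| := by
                gcongr; exact abs_add_le _ _
            _ ≤ |(a - e) + (e - k) + (-(c - k))| + |c - d| + |d - k| + |(-(e-k))| + |(-(b - e))| := by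
                gcongr; exact abs_add_le _ _
            _ ≤ |a - e| + |e - k| + |(-(c - k))| + |c - d| + |d - k| + |(-(e-k))| + |(-(b - e))| := by
                gcongr
            _ = |a - e| + |e - k| + |c - k| + |c - d| + |d - k| + |e - k| + |b - e| := by
                rw [abs_neg, abs_neg, abs_neg]
      _ = _ := by ring
  have hsum : ((Lo:ℝ) * Lf) * (W1 νt₀ νt).toReal + ((Lo:ℝ) * Lf) * (W1 νt νs).toReal
      + ((Lo:ℝ) * Lf) * (W1 νs₀ νs).toReal + ((Lo:ℝ) * Lf) * (W1 νs₀ νs₁).toReal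
      + ((Lo:ℝ) * Lf) * (W1 νs₁ νs).toReal + ((Lo:ℝ) * Lf) * (W1 νt νs).toReal
      + ((Lo:ℝ) * Lf) * (W1 νt₁ νt).toReal
      = (Lo:ℝ) * Lf * ((W1 νs₀ νs₁).toReal
        + (W1 νt₀ νt).toReal + (W1 νt₁ νt).toReal
        + (W1 νs₀ νs).toReal + (W1 νs₁ νs).toReal
        + 2 * (W1 νt νs).toReal) := by ring
  linarith [chain, h1, h2, h3, h4, h5, h6]
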